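/- Let P be a probability measure dominated by μ with density p, and suppose θ ↦ s_θ = 2√(p_θ) is differentiable in quadratic mean at θ₀ with derivative ṡ ∈ L²(μ)ᵐ, i.e. ∫ (s_{θ₀+h} − s_{θ₀} − hᵀṡ)² dμ = o(|h|²). Define the score ℓ̇ = 2 ṡ / s_{θ₀} on {s_{θ₀} > 0}. If additionally ṡ = 0 μ-a.e. on {s_{θ₀} = 0}, then ∫ ℓ̇ dP_{θ₀} = 0 (the score has zero mean) and each component ℓ̇ᵢ ∈ L²(P_{θ₀}) with ∫ ℓ̇ᵢ ℓ̇ⱼ dP_{θ₀} = ∫ ṡᵢ ṡⱼ dμ (finite information). -/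

import Mathlib

open MeasureTheory
open scoped ENNReal NNReal

section helpers
variable {α : Type*} [MeasurableSpace α] {μ : Measure α}

lemma myL2mul {f g : α → ℝ} (hf : MemLp f 2 μ) (hg : MemLp g 2 μ) :
    Integrable (fun x => f x * g x) μ := by
  refine Integrable.mono' ((hf.integrable_sq.add hg.integrable_sq).div_const 2)
    (hf.1.mul hg.1) ?_
  filter_upwards with x
  rw [Real.norm_eq_abs, abs_mul]; simp only [Pi.add_apply]
  nlinarith [sq_abs (f x), sq_abs (g x), sq_nonneg (|f x| - |g x|)]

lemma myCS {f g : α → ℝ} (hf : MemLp f 2 μ) (hg : MemLp g 2 μ) :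
    abs (∫ x, f x * g x ∂μ) ≤
      Real.sqrt (∫ x, f x ^ 2 ∂μ) * Real.sqrt (∫ x, g x ^ 2 ∂μ) := by
  have h2 : (2 : ℝ≥0∞) = ENNReal.ofReal (2 : ℝ) := by norm_num
  have hconj : (2:ℝ).HolderConjugate 2 := Real.holderConjugate_iff.mpr ⟨one_lt_two, by norm_num⟩
  have hf' : MemLp f (ENNReal.ofReal (2:ℝ)) μ := h2 ▸ hf
  have hg' : MemLp g (ENNReal.ofReal (2:ℝ)) μ := h2 ▸ hg
  have key := integral_mul_norm_le_Lp_mul_Lq hconj hf' hg'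
  have e1 : ∀ (h : α → ℝ), (∫ x, ‖h x‖ ^ (2:ℝ) ∂μ) = ∫ x, h x ^ 2 ∂μ := by
    intro h; refine integral_congr_ae (Filter.Eventually.of_forall fun x => ?_)
    show ‖h x‖ ^ (2:ℝ) = h x ^ 2
    rw [show ((2:ℝ) = ((2:ℕ):ℝ)) by norm_num, Real.rpow_natCast, Real.norm_eq_abs, sq_abs]
  have habs : abs (∫ x, f x * g x ∂μ) ≤ ∫ x, ‖f x‖ * ‖g x‖ ∂μ := by
    calc abs (∫ x, f x * g x ∂μ) ≤ ∫ x, ‖f x * g x‖ ∂μ := by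
          simpa [Real.norm_eq_abs] using norm_integral_le_integral_norm (fun x => f x * g x)
      _ = ∫ x, ‖f x‖ * ‖g x‖ ∂μ := by
          refine integral_congr_ae (Filter.Eventually.of_forall fun x => ?_)
          simp [norm_mul]
  refine habs.trans (key.trans_eq ?_)
  rw [e1 f, e1 g, Real.sqrt_eq_rpow, Real.sqrt_eq_rpow]

lemma myKey {s0 g : α → ℝ} (hs : MemLp s0 2 μ) (hg : MemLp g 2 μ)
    (H : ∀ ε > (0:ℝ), ∃ δ > (0:ℝ), ∀ t : ℝ, 0 < t → t ≤ δ →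
      ∃ d : α → ℝ, MemLp d 2 μ ∧ (∫ x, (s0 x + d x)^2 ∂μ) = (∫ x, s0 x ^ 2 ∂μ) ∧
        ∫ x, (d x - t * g x)^2 ∂μ ≤ ε * t^2) :
    ∫ x, s0 x * g x ∂μ = 0 := by
  set A := ∫ x, s0 x * g x ∂μ with hA
  set B := Real.sqrt (∫ x, s0 x ^ 2 ∂μ) with hB
  set C := ∫ x, g x ^ 2 ∂μ with hC
  have hBnn : 0 ≤ B := Real.sqrt_nonneg _
  have hCnn : 0 ≤ C := integral_nonneg fun x => sq_nonneg _
  have main : ∀ ρ > (0:ℝ), |A| ≤ ρ := by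
    intro ρ hρ
    set ε := (ρ/(2*(B+1)))^2 with hε
    have hεpos : 0 < ε := by positivity
    obtain ⟨δ, hδ, Hδ⟩ := H ε hεpos
    set t := min δ (ρ/(2*(ε+C+1))) with ht
    have htpos : 0 < t := lt_min hδ (by positivity)
    obtain ⟨d, hd, hsum, hclose⟩ := Hδ t htpos (min_le_left _ _)
    have hsd : Integrable (fun x => s0 x * d x) μ := myL2mul hs hd
    have hs2 := hs.integrable_sq
    have hd2 := hd.integrable_sq
    have hexp : ∫ x, (s0 x + d x)^2 ∂μ
        = (∫ x, s0 x ^ 2 ∂μ) + (2*(∫ x, s0 x * d x ∂μ) + ∫ x, d x ^ 2 ∂μ) := by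
      calc ∫ x, (s0 x + d x)^2 ∂μ
          = ∫ x, (s0 x ^ 2 + (2*(s0 x * d x) + d x ^ 2)) ∂μ :=
            integral_congr_ae (.of_forall fun x => by ring)
        _ = (∫ x, s0 x ^ 2 ∂μ) + ∫ x, (2*(s0 x * d x) + d x ^ 2) ∂μ :=
            integral_add hs2 ((hsd.const_mul 2).add hd2)
        _ = (∫ x, s0 x ^ 2 ∂μ) + (2*(∫ x, s0 x * d x ∂μ) + ∫ x, d x ^ 2 ∂μ) := by
            rw [integral_add (hsd.const_mul 2) hd2, integral_const_mul]
    have hsd_eq : ∫ x, s0 x * d x ∂μ = -(∫ x, d x ^ 2 ∂μ)/2 := by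
      have h0 := hsum; rw [hexp] at h0; linarith
    set e : α → ℝ := fun x => d x - t * g x with he
    have heL2 : MemLp e 2 μ := hd.sub (hg.const_mul t)
    have he2 := heL2.integrable_sq
    have hg2 := hg.integrable_sq
    have he2le : ∫ x, e x ^ 2 ∂μ ≤ ε*t^2 := hclose
    have he2nn : 0 ≤ ∫ x, e x ^ 2 ∂μ := integral_nonneg fun x => sq_nonneg _
    have hd2le : ∫ x, d x ^ 2 ∂μ ≤ 2*(∫ x, e x ^ 2 ∂μ) + 2*t^2*C := by
      have hint : Integrable (fun x => 2*(e x ^ 2) + 2*t^2*(g x ^ 2)) μ :=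
        (he2.const_mul 2).add (hg2.const_mul (2*t^2))
      calc ∫ x, d x ^ 2 ∂μ ≤ ∫ x, 2*(e x ^ 2) + 2*t^2*(g x ^ 2) ∂μ := by
            refine integral_mono hd2 hint fun x => ?_
            simp only [he]; nlinarith [sq_nonneg (d x - 2*t*g x)]
        _ = 2*(∫ x, e x ^ 2 ∂μ) + 2*t^2*C := by
            rw [integral_add (he2.const_mul 2) (hg2.const_mul (2*t^2)),
              integral_const_mul, integral_const_mul, hC]
    have hse : Integrable (fun x => s0 x * e x) μ := myL2mul hs heL2
    have htA : t * A = (∫ x, s0 x * d x ∂μ) - ∫ x, s0 x * e x ∂μ := by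
      rw [show (∫ x, s0 x * d x ∂μ) - ∫ x, s0 x * e x ∂μ
          = ∫ x, (s0 x * d x - s0 x * e x) ∂μ from (integral_sub hsd hse).symm,
        hA, show t * (∫ x, s0 x * g x ∂μ) = ∫ x, t * (s0 x * g x) ∂μ from
          (integral_const_mul t _).symm]
      exact integral_congr_ae (.of_forall fun x => by simp only [he]; ring)
    have hsqrt : Real.sqrt (ε * t^2) = (ρ/(2*(B+1))) * t := by
      rw [hε, Real.sqrt_mul (sq_nonneg _), Real.sqrt_sq (by positivity),
        Real.sqrt_sq htpos.le]
    have hCS : |∫ x, s0 x * e x ∂μ| ≤ B * ((ρ/(2*(B+1))) * t) := by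
      refine (myCS hs heL2).trans ?_
      rw [← hsqrt, ← hB]
      exact mul_le_mul_of_nonneg_left (Real.sqrt_le_sqrt he2le) hBnn
    have hsd_abs : |∫ x, s0 x * d x ∂μ| ≤ ε*t^2 + t^2*C := by
      rw [hsd_eq, abs_div, abs_neg,
        abs_of_nonneg (integral_nonneg fun x => sq_nonneg (d x))]
      rw [abs_of_nonneg (by norm_num : (0:ℝ) ≤ 2)]
      linarith
    have step1 : t*(ε+C) ≤ ρ/2 := by
      have h2 : t ≤ ρ/(2*(ε+C+1)) := min_le_right _ _
      calc t*(ε+C) ≤ (ρ/(2*(ε+C+1)))*(ε+C) :=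
            mul_le_mul_of_nonneg_right h2 (by positivity)
        _ ≤ ρ/2 := by
            rw [div_mul_eq_mul_div, div_le_div_iff₀ (by positivity) two_pos]
            nlinarith
    have step2 : B*(ρ/(2*(B+1))) ≤ ρ/2 := by
      rw [← mul_div_assoc, div_le_div_iff₀ (by positivity) two_pos]
      nlinarith
    clear_value A B C t ε
    have p1 : ε*t^2 + t^2*C ≤ t*ρ/2 := by
      calc ε*t^2 + t^2*C = (t*(ε+C))*t := by ring
        _ ≤ (ρ/2)*t := mul_le_mul_of_nonneg_right step1 htpos.le
        _ = t*ρ/2 := by ring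
    have p2 : B*((ρ/(2*(B+1)))*t) ≤ t*ρ/2 := by
      calc B*((ρ/(2*(B+1)))*t) = (B*(ρ/(2*(B+1))))*t := by ring
        _ ≤ (ρ/2)*t := mul_le_mul_of_nonneg_right step2 htpos.le
        _ = t*ρ/2 := by ring
    have h1 : |t * A| ≤ |∫ x, s0 x * d x ∂μ| + |∫ x, s0 x * e x ∂μ| := by
      rw [htA]; exact abs_sub _ _
    have h2 : |t * A| = t * |A| := by rw [abs_mul, abs_of_pos htpos]
    have habs : t * |A| ≤ t * ρ := by linarith
    exact le_of_mul_le_mul_left habs htpos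
  by_contra h
  have hApos : 0 < |A| := abs_pos.mpr h
  have := main (|A|/2) (by positivity)
  linarith
end helpers

/-- DQM properties: under differentiability in quadratic mean at `θ₀`, the score
`ℓ̇ = 2 ṡ / s_{θ₀}` has zero mean under `P_{θ₀}`, is square-integrable, and the
information matrix is finite with `∫ ℓ̇ᵢ ℓ̇ⱼ dP_{θ₀} = ∫ ṡᵢ ṡⱼ dμ`. -/
theorem stmt15 {α : Type*} [MeasurableSpace α] (μ : Measure α) [SigmaFinite μ]
    {m : ℕ} (s : (Fin m → ℝ) → α → ℝ) (θ₀ : Fin m → ℝ)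
    (sdot : Fin m → α → ℝ)
    (hsnn : ∀ θ x, 0 ≤ s θ x)
    (hsL2 : ∀ θ, MemLp (s θ) 2 μ)
    (hdot : ∀ i, MemLp (sdot i) 2 μ)
    (hdqm : ∀ ε > (0:ℝ), ∃ δ > (0:ℝ), ∀ h : Fin m → ℝ, ‖h‖ ≤ δ →
      ∫ x, (s (θ₀ + h) x - s θ₀ x - ∑ i, h i * sdot i x) ^ 2 ∂μ ≤ ε * ‖h‖ ^ 2)
    (hprob : ∀ θ, (μ.withDensity (fun x => ENNReal.ofReal ((s θ x / 2) ^ 2)))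
      Set.univ = 1)
    (hvanish : ∀ i, ∀ᵐ x ∂μ, s θ₀ x = 0 → sdot i x = 0)
    (ldot : Fin m → α → ℝ)
    (hldot : ∀ i, ldot i = fun x => 2 * sdot i x / s θ₀ x)
    (P₀ : Measure α)
    (hP₀ : P₀ = μ.withDensity (fun x => ENNReal.ofReal ((s θ₀ x / 2) ^ 2))) :
    (∀ i, ∫ x, ldot i x ∂P₀ = 0) ∧
      (∀ i, MemLp (ldot i) 2 P₀) ∧
      (∀ i j, ∫ x, ldot i x * ldot j x ∂P₀ = ∫ x, sdot i x * sdot j x ∂μ) := by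
  -- the L² norm of `s θ` is constant (equal to 2) in `θ`
  have hnorm : ∀ θ, ∫ x, s θ x ^ 2 ∂μ = 4 := by
    intro θ
    have h1 : ∫⁻ x, ENNReal.ofReal ((s θ x / 2) ^ 2) ∂μ = 1 := by
      have h := hprob θ
      rwa [withDensity_apply _ MeasurableSet.univ, setLIntegral_univ] at h
    have haesm : AEStronglyMeasurable (fun x => (s θ x / 2) ^ 2) μ :=
      (((hsL2 θ).1.aemeasurable.div_const 2).pow_const 2).aestronglyMeasurable
    have h2 : ∫ x, (s θ x / 2) ^ 2 ∂μ = 1 := by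
      rw [integral_eq_lintegral_of_nonneg_ae
        (Filter.Eventually.of_forall fun x => sq_nonneg _) haesm, h1, ENNReal.toReal_one]
    calc ∫ x, s θ x ^ 2 ∂μ = ∫ x, 4 * ((s θ x / 2) ^ 2) ∂μ :=
          integral_congr_ae (.of_forall fun x => by ring)
      _ = 4 * ∫ x, (s θ x / 2) ^ 2 ∂μ := integral_const_mul 4 _
      _ = 4 := by rw [h2]; norm_num
  -- the score equation: ∫ s θ₀ · ṡᵢ dμ = 0
  have hzero : ∀ i, ∫ x, s θ₀ x * sdot i x ∂μ = 0 := by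
    intro i
    refine myKey (hsL2 θ₀) (hdot i) ?_
    intro ε hε
    obtain ⟨δ, hδ, hdq⟩ := hdqm ε hε
    refine ⟨δ, hδ, fun t htpos htle => ?_⟩
    set h : Fin m → ℝ := t • (Pi.single i 1 : Fin m → ℝ) with hh
    have hhn : ‖h‖ = t := by
      rw [hh, norm_smul, Pi.norm_single, norm_one, mul_one, Real.norm_eq_abs,
        abs_of_pos htpos]
    refine ⟨fun x => s (θ₀ + h) x - s θ₀ x, (hsL2 _).sub (hsL2 θ₀), ?_, ?_⟩
    · calc ∫ x, (s θ₀ x + (s (θ₀ + h) x - s θ₀ x)) ^ 2 ∂μ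
          = ∫ x, s (θ₀ + h) x ^ 2 ∂μ :=
            integral_congr_ae (.of_forall fun x => by ring)
        _ = ∫ x, s θ₀ x ^ 2 ∂μ := by rw [hnorm, hnorm]
    · have hq := hdq h (by rw [hhn]; exact htle)
      rw [hhn] at hq
      refine le_trans (le_of_eq ?_) hq
      refine integral_congr_ae (.of_forall fun x => ?_)
      have hsum : ∑ j, h j * sdot j x = t * sdot i x := by
        rw [hh]; simp [Pi.single_apply, ite_mul, Finset.sum_ite_eq']
      show (s (θ₀ + h) x - s θ₀ x - t * sdot i x) ^ 2
          = (s (θ₀ + h) x - s θ₀ x - ∑ j, h j * sdot j x) ^ 2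
      rw [hsum]
  -- change of measure machinery
  have hsm : AEMeasurable (s θ₀) μ := (hsL2 θ₀).1.aemeasurable
  set v : α → ℝ := fun x => (s θ₀ x / 2) ^ 2 with hv
  have hvm : AEMeasurable v μ := (hsm.div_const 2).pow_const 2
  set w : α → ℝ≥0 := fun x => (v x).toNNReal with hwdef
  have hwm : AEMeasurable w μ := measurable_real_toNNReal.comp_aemeasurable hvm
  have hP₀' : P₀ = μ.withDensity (fun x => ((w x : ℝ≥0) : ℝ≥0∞)) := hP₀
  have hcoe : ∀ x, ((w x : ℝ≥0) : ℝ) = v x := fun x => Real.coe_toNNReal _ (sq_nonneg _)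
  have hconv : ∀ f : α → ℝ, ∫ x, f x ∂P₀ = ∫ x, v x * f x ∂μ := by
    intro f
    rw [hP₀', integral_withDensity_eq_integral_smul₀ hwm f]
    refine integral_congr_ae (.of_forall fun x => ?_)
    show w x • f x = v x * f x
    rw [NNReal.smul_def, hcoe, smul_eq_mul]
  refine ⟨?_, ?_, ?_⟩
  · -- zero mean
    intro i
    rw [hconv]
    have heq : ∫ x, v x * ldot i x ∂μ = ∫ x, (s θ₀ x * sdot i x) / 2 ∂μ := by
      refine integral_congr_ae (.of_forall fun x => ?_)
      rw [hldot i]; simp only [hv]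
      by_cases hx : s θ₀ x = 0
      · simp [hx]
      · field_simp
    rw [heq, integral_div, hzero i]
    norm_num
  · -- square integrability
    intro i
    have hlm : AEStronglyMeasurable (ldot i) μ := by
      rw [hldot i]
      exact (((hdot i).1.aemeasurable.const_mul 2).div hsm).aestronglyMeasurable
    have hlmP : AEStronglyMeasurable (ldot i) P₀ := by
      rw [hP₀']
      exact hlm.mono_ac (withDensity_absolutelyContinuous μ _)
    rw [memLp_two_iff_integrable_sq hlmP, hP₀',
      integrable_withDensity_iff_integrable_smul₀ hwm]
    refine ((hdot i).integrable_sq).congr ?_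
    filter_upwards [hvanish i] with x hx
    rw [NNReal.smul_def, hcoe, hldot i]; simp only [hv]
    by_cases hz : s θ₀ x = 0
    · simp [hz, hx hz]
    · field_simp; ring_nf; rw [mul_assoc, ← mul_pow, mul_inv_cancel₀ hz, one_pow, mul_one]
  · -- information matrix
    intro i j
    rw [hconv]
    refine integral_congr_ae ?_
    filter_upwards [hvanish i, hvanish j] with x hxi hxj
    rw [hldot i, hldot j]; simp only [hv]
    by_cases hz : s θ₀ x = 0
    · simp [hz, hxi hz, hxj hz]
    · field_simp
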